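/- Given b ≥ 2 and k ≥ 1, if there exists a k-oasis base b, then there exists a k-mirage base b; that is, there exist k consecutive integers d_1,...,d_k and non-negative integers r_1,...,r_k each less than b³ with d_i = r_i − S_{[0,b]}(r_i) for all i. -/

import Mathlib

/-- The augmented generalized happy function: `c` plus the sum of squares of the base-`b`
digits of `a` (with the convention that it maps `0` to `c`). -/
def S (c b a : ℕ) : ℕ := c + ((Nat.digits b a).map (· ^ 2)).sum

/-- sum of squares of base-b digits -/
def sig (b x : ℕ) : ℕ := ((Nat.digits b x).map (· ^ 2)).sum

lemma S_eq (c b a : ℕ) : S c b a = c + sig b a := rfl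

lemma sig_zero (b : ℕ) : sig b 0 = 0 := by simp [sig]

lemma sig_rec {b : ℕ} (hb : 2 ≤ b) {x : ℕ} (hx : 0 < x) :
    sig b x = (x % b) ^ 2 + sig b (x / b) := by
  unfold sig
  rw [Nat.digits_def' (by omega : 1 < b) hx]
  simp

lemma sig_rec' {b : ℕ} (hb : 2 ≤ b) (x : ℕ) :
    sig b x = (x % b) ^ 2 + sig b (x / b) := by
  rcases Nat.eq_zero_or_pos x with h | h
  · subst h; simp [sig_zero]
  · exact sig_rec hb h

lemma sig_split {b : ℕ} (hb : 2 ≤ b) :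
    ∀ n t s, s < b ^ n → sig b (s + b ^ n * t) = sig b s + sig b t := by
  intro n
  induction n with
  | zero =>
    intro t s hs
    have hs0 : s = 0 := by simpa using hs
    subst hs0
    simp [sig_zero]
  | succ n ih =>
    intro t s hs
    have hb0 : 0 < b := by omega
    rcases Nat.eq_zero_or_pos (s + b ^ (n + 1) * t) with h0 | h0
    · have hs0 : s = 0 := by omega
      have ht0 : t = 0 := by
        have : b ^ (n+1) * t = 0 := by omega
        have hbp : 0 < b ^ (n+1) := Nat.pow_pos hb0
        exact (Nat.mul_eq_zero.mp this).resolve_left (by omega)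
      subst hs0; subst ht0; simp [sig_zero]
    · rw [sig_rec hb h0]
      have hmod : (s + b ^ (n + 1) * t) % b = s % b := by
        have : b ^ (n+1) * t = b * (b ^ n * t) := by ring
        rw [this, Nat.add_mul_mod_self_left]
      have hdiv : (s + b ^ (n + 1) * t) / b = s / b + b ^ n * t := by
        have : b ^ (n+1) * t = b * (b ^ n * t) := by ring
        rw [this, Nat.add_mul_div_left _ _ hb0]
      rw [hmod, hdiv]
      have hsb : s / b < b ^ n := by
        rw [Nat.div_lt_iff_lt_mul hb0]
        calc s < b ^ (n+1) := hs
        _ = b ^ n * b := by ring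
      rw [ih t (s / b) hsb]
      rw [sig_rec' hb s]
      ring

lemma sig_three {b : ℕ} (hb : 2 ≤ b) {s : ℕ} (hs : s < b ^ 3) :
    sig b s = (s % b) ^ 2 + (s / b % b) ^ 2 + (s / b / b) ^ 2 ∧
      s = s % b + b * (s / b % b) + b ^ 2 * (s / b / b) ∧ s / b / b < b := by
  have hb0 : 0 < b := by omega
  have h1 := Nat.mod_add_div s b
  have h2 := Nat.mod_add_div (s / b) b
  have hlt : s / b / b < b := by
    rw [Nat.div_lt_iff_lt_mul hb0, Nat.div_lt_iff_lt_mul hb0]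
    calc s < b ^ 3 := hs
    _ = b * b * b := by ring
  refine ⟨?_, by nlinarith [h1, h2], hlt⟩
  rw [sig_rec' hb s, sig_rec' hb (s / b), sig_rec' hb (s / b / b)]
  have : s / b / b / b = 0 := Nat.div_eq_of_lt hlt
  have hm : s / b / b % b = s / b / b := Nat.mod_eq_of_lt hlt
  rw [this, hm, sig_zero]
  ring

/-- bounds on `s - sig b s` for three-digit `s` -/
lemma T3_bounds {b : ℕ} (hb : 2 ≤ b) {s : ℕ} (hs : s < b ^ 3) :
    -(((b : ℤ) - 1) * ((b : ℤ) - 2)) ≤ (s : ℤ) - sig b s ∧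
      4 * ((s : ℤ) - sig b s) ≤ 4 * ((b : ℤ) - 1) * ((b : ℤ) ^ 2 - b + 1) + (b : ℤ) ^ 2 := by
  obtain ⟨hsig, hrep, hlt2⟩ := sig_three hb hs
  set a0 := s % b with ha0
  set a1 := s / b % b with ha1
  set a2 := s / b / b with ha2
  have h0 : a0 < b := Nat.mod_lt _ (by omega)
  have h1 : a1 < b := Nat.mod_lt _ (by omega)
  have key : (s : ℤ) - sig b s =
      ((a0 : ℤ) - a0 ^ 2) + (a1 : ℤ) * (b - a1) + (a2 : ℤ) * ((b : ℤ) ^ 2 - a2) := by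
    rw [hsig]
    push_cast
    nth_rewrite 1 [hrep]
    push_cast
    ring
  have c0 : (a0 : ℤ) ≤ (b : ℤ) - 1 := by
    have : (a0 : ℤ) < b := by exact_mod_cast h0
    omega
  have c1 : (a1 : ℤ) ≤ (b : ℤ) - 1 := by
    have : (a1 : ℤ) < b := by exact_mod_cast h1
    omega
  have c2 : (a2 : ℤ) ≤ (b : ℤ) - 1 := by
    have : (a2 : ℤ) < b := by exact_mod_cast hlt2
    omega
  have hbz : (2 : ℤ) ≤ (b : ℤ) := by exact_mod_cast hb
  have n0 : (0 : ℤ) ≤ (a0 : ℤ) := Int.natCast_nonneg _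
  have n1 : (0 : ℤ) ≤ (a1 : ℤ) := Int.natCast_nonneg _
  have n2 : (0 : ℤ) ≤ (a2 : ℤ) := Int.natCast_nonneg _
  have hb2 : (0:ℤ) ≤ (b:ℤ)^2 - a2 := by nlinarith
  have hb3 : (0:ℤ) ≤ (b:ℤ)^2 - b + 1 - a2 := by nlinarith
  have p1 : (0:ℤ) ≤ (a1:ℤ) * ((b:ℤ) - a1) := mul_nonneg n1 (by linarith)
  have p2 : (0:ℤ) ≤ (a2:ℤ) * ((b:ℤ)^2 - a2) := mul_nonneg n2 hb2
  have p3 : (0:ℤ) ≤ ((b:ℤ) - 1 - a0) * ((a0:ℤ) + b - 2) :=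
    mul_nonneg (by linarith) (by linarith)
  have p4 : (0:ℤ) ≤ ((b:ℤ) - 2*a1)^2 := sq_nonneg _
  have p5 : (0:ℤ) ≤ ((b:ℤ) - 1 - a2) * ((b:ℤ)^2 - b + 1 - a2) :=
    mul_nonneg (by linarith) hb3
  have p6 : (a0:ℤ) ≤ (a0:ℤ)^2 := by
    have : a0 ≤ a0 ^ 2 := Nat.le_self_pow (by norm_num) a0
    exact_mod_cast this
  have e3 : ((b:ℤ) - 1 - a0) * ((a0:ℤ) + b - 2) = (a0:ℤ) - a0^2 + ((b:ℤ)-1)*((b:ℤ)-2) := by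
    ring
  have e1 : 4*(a1:ℤ)*((b:ℤ)-a1) = (b:ℤ)^2 - ((b:ℤ) - 2*a1)^2 := by ring
  have e2 : (a2:ℤ)*((b:ℤ)^2-a2) =
      ((b:ℤ)-1)*((b:ℤ)^2-b+1) - ((b:ℤ) - 1 - a2) * ((b:ℤ)^2 - b + 1 - a2) := by ring
  constructor
  · rw [key]; linarith [p1, p2, p3, e3]
  · rw [key]; linarith [p4, p5, p6, e1, e2]

lemma sig_succ {b : ℕ} (hb : 2 ≤ b) : ∀ t, sig b (t + 1) ≤ sig b t + (2 * b - 3) := by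
  intro t
  induction t using Nat.strong_induction_on with
  | _ t ih =>
    have hb0 : 0 < b := by omega
    have hd := Nat.mod_add_div t b
    set q := t / b with hq
    set r := t % b with hr
    have hrb : r < b := Nat.mod_lt _ hb0
    by_cases hcase : r + 1 < b
    · have ht1 : t + 1 = (r + 1) + b * q := by omega
      have hmod : (t + 1) % b = r + 1 := by
        rw [ht1, Nat.add_mul_mod_self_left, Nat.mod_eq_of_lt hcase]
      have hdiv : (t + 1) / b = q := by
        rw [ht1, Nat.add_mul_div_left _ _ hb0, Nat.div_eq_of_lt hcase]
        omega
      rw [sig_rec hb (Nat.succ_pos t), hmod, hdiv]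
      rw [sig_rec' hb t, ← hr, ← hq]
      have h3 : 3 ≤ 2 * b := by omega
      have : (r + 1) ^ 2 ≤ r ^ 2 + (2 * b - 3) := by
        zify [h3]
        have : (r : ℤ) + 1 < (b : ℤ) := by exact_mod_cast hcase
        nlinarith
      omega
    · have hrbe : r = b - 1 := by omega
      have hmul : b * (q + 1) = b * q + b := by ring
      have ht1 : t + 1 = 0 + b * (q + 1) := by omega
      have hmod : (t + 1) % b = 0 := by rw [ht1, Nat.add_mul_mod_self_left]; simp
      have hdiv : (t + 1) / b = q + 1 := by
        rw [ht1, Nat.add_mul_div_left _ _ hb0]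
        simp
      have hqlt : q < t := by
        have : t = b * q + (b - 1) := by omega
        nlinarith
      have hih := ih q hqlt
      rw [sig_rec hb (Nat.succ_pos t), hmod, hdiv]
      rw [sig_rec' hb t, ← hr, ← hq]
      have : 0 ^ 2 + sig b (q + 1) ≤ sig b q + (2 * b - 3) := by omega
      omega

lemma sig_add_le {b : ℕ} (hb : 2 ≤ b) (t : ℕ) : ∀ Δ, sig b (t + Δ) ≤ sig b t + Δ * (2 * b - 3) := by
  intro Δ
  induction Δ with
  | zero => simp
  | succ n ih =>
    have := sig_succ hb (t + n)
    calc sig b (t + (n + 1)) = sig b ((t + n) + 1) := by ring_nf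
    _ ≤ sig b (t + n) + (2 * b - 3) := this
    _ ≤ sig b t + n * (2 * b - 3) + (2 * b - 3) := by omega
    _ = sig b t + (n + 1) * (2 * b - 3) := by ring

/-- consecutive values of `r - sig r` must lie at the same `b^3`-level -/
lemma level_eq {b : ℕ} (hb : 2 ≤ b) {s s' t t' : ℕ} (hs : s < b ^ 3) (hs' : s' < b ^ 3)
    (heq : ((s' : ℤ) - sig b s') + ((b : ℤ) ^ 3 * t' - sig b t')
      = ((s : ℤ) - sig b s) + ((b : ℤ) ^ 3 * t - sig b t) + 1) : t' = t := by
  have hbz : (2 : ℤ) ≤ (b : ℤ) := by exact_mod_cast hb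
  have B := T3_bounds hb hs
  have B' := T3_bounds hb hs'
  have h23 : (((2 * b - 3 : ℕ)) : ℤ) = 2 * (b : ℤ) - 3 := by omega
  have hgap : (0:ℤ) ≤ (b:ℤ)^3 - (2*(b:ℤ) - 3) := by nlinarith
  have f6 : (0:ℤ) ≤ 3*(b:ℤ)*((b:ℤ)-2) :=
    mul_nonneg (by linarith) (by linarith)
  rcases lt_trichotomy t t' with hlt | he | hlt
  · exfalso
    obtain ⟨Δ, hΔ⟩ : ∃ Δ : ℕ, t' = t + (Δ + 1) := ⟨t' - t - 1, by omega⟩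
    have hΔ0 : (0:ℤ) ≤ (Δ:ℤ) := Int.natCast_nonneg _
    have hσ : (sig b t' : ℤ) ≤ (sig b t : ℤ) + ((Δ:ℤ) + 1) * (2*(b:ℤ) - 3) := by
      have h1 := sig_add_le hb t (Δ + 1)
      rw [← hΔ] at h1
      have h2 := (Nat.cast_le (α := ℤ)).mpr h1
      push_cast [h23] at h2
      linarith
    have hbt : (b:ℤ)^3 * t' = (b:ℤ)^3 * t + (b:ℤ)^3 * ((Δ:ℤ)+1) := by
      have ht' : (t' : ℤ) = (t : ℤ) + ((Δ:ℤ) + 1) := by exact_mod_cast hΔ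
      rw [ht']; ring
    have hkey : ((Δ:ℤ)+1) * ((b:ℤ)^3 - (2*(b:ℤ) - 3)) ≥ (b:ℤ)^3 - (2*(b:ℤ) - 3) := by
      have h := mul_nonneg hΔ0 hgap
      nlinarith
    linarith [B.2, B'.1, hσ, hbt, hkey, heq]
  · exact he.symm
  · exfalso
    obtain ⟨Δ, hΔ⟩ : ∃ Δ : ℕ, t = t' + (Δ + 1) := ⟨t - t' - 1, by omega⟩
    have hΔ0 : (0:ℤ) ≤ (Δ:ℤ) := Int.natCast_nonneg _
    have hσ : (sig b t : ℤ) ≤ (sig b t' : ℤ) + ((Δ:ℤ) + 1) * (2*(b:ℤ) - 3) := by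
      have h1 := sig_add_le hb t' (Δ + 1)
      rw [← hΔ] at h1
      have h2 := (Nat.cast_le (α := ℤ)).mpr h1
      push_cast [h23] at h2
      linarith
    have hbt : (b:ℤ)^3 * t = (b:ℤ)^3 * t' + (b:ℤ)^3 * ((Δ:ℤ)+1) := by
      have ht' : (t : ℤ) = (t' : ℤ) + ((Δ:ℤ) + 1) := by exact_mod_cast hΔ
      rw [ht']; ring
    have hkey : ((Δ:ℤ)+1) * ((b:ℤ)^3 - (2*(b:ℤ) - 3)) ≥ (b:ℤ)^3 - (2*(b:ℤ) - 3) := by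
      have h := mul_nonneg hΔ0 hgap
      nlinarith
    linarith [B.1, B'.2, hσ, hbt, hkey, heq]

theorem stmt_18 (b k : ℕ) (hb : 2 ≤ b) (hk : 1 ≤ k)
    (h : ∃ c : ℕ, ∀ j, 1 ≤ j → j ≤ k → ∃ a : ℕ, 0 < a ∧ S (c + j) b a = a) :
    ∃ (d : ℤ) (r : Fin k → ℕ), (∀ i, r i < b ^ 3) ∧
      ∀ i : Fin k, (r i : ℤ) - (S 0 b (r i) : ℤ) = d + i := by
  obtain ⟨c, hc⟩ := h
  have hb3 : 0 < b ^ 3 := Nat.pow_pos (by omega)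
  have hc' : ∀ j : ℕ, ∃ a : ℕ, (1 ≤ j → j ≤ k → 0 < a ∧ S (c + j) b a = a) := by
    intro j
    by_cases hj : 1 ≤ j ∧ j ≤ k
    · obtain ⟨a, ha⟩ := hc j hj.1 hj.2
      exact ⟨a, fun _ _ => ha⟩
    · exact ⟨0, fun h1 h2 => absurd ⟨h1, h2⟩ hj⟩
  choose A hA using hc'
  set sf : ℕ → ℕ := fun j => A j % b ^ 3 with hsf
  set tf : ℕ → ℕ := fun j => A j / b ^ 3 with htf
  have hslt : ∀ j, sf j < b ^ 3 := fun j => Nat.mod_lt _ hb3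
  have key : ∀ j, 1 ≤ j → j ≤ k →
      ((sf j : ℤ) - sig b (sf j)) + ((b : ℤ) ^ 3 * tf j - sig b (tf j)) = (c : ℤ) + j := by
    intro j h1 h2
    obtain ⟨hpos, hfix⟩ := hA j h1 h2
    have hdecomp : sf j + b ^ 3 * tf j = A j := Nat.mod_add_div _ _
    have hsig : sig b (A j) = sig b (sf j) + sig b (tf j) := by
      rw [← hdecomp]; exact sig_split hb 3 (tf j) (sf j) (hslt j)
    have hfix' : c + j + sig b (A j) = A j := by
      rw [← S_eq]; exact hfix
    have e1 : ((A j : ℤ)) = (sf j : ℤ) + (b : ℤ) ^ 3 * tf j := by exact_mod_cast hdecomp.symm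
    have e2 : (c : ℤ) + j + sig b (A j) = A j := by exact_mod_cast hfix'
    have e3 : (sig b (A j) : ℤ) = sig b (sf j) + sig b (tf j) := by exact_mod_cast hsig
    linarith
  have hlevel : ∀ j, 1 ≤ j → j + 1 ≤ k → tf (j + 1) = tf j := by
    intro j h1 h2
    have k1 := key j h1 (by omega)
    have k2 := key (j + 1) (by omega) h2
    refine level_eq hb (hslt j) (hslt (j + 1)) ?_
    rw [k1, k2]
    push_cast
    ring
  have hconst : ∀ j, 1 ≤ j → j ≤ k → tf j = tf 1 := by
    intro j
    induction j with
    | zero => intro h1 _; exact absurd h1 (by omega)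
    | succ n ih =>
      intro _ h2
      rcases Nat.eq_zero_or_pos n with hn | hn
      · subst hn; rfl
      · rw [hlevel n hn h2]; exact ih hn (by omega)
  refine ⟨(c : ℤ) + 1 - ((b : ℤ) ^ 3 * tf 1 - sig b (tf 1)), fun i => sf ((i : ℕ) + 1),
    fun i => hslt _, ?_⟩
  intro i
  have hi1 : 1 ≤ (i : ℕ) + 1 := by omega
  have hi2 : (i : ℕ) + 1 ≤ k := i.isLt
  have hk' := key ((i : ℕ) + 1) hi1 hi2
  rw [hconst ((i : ℕ) + 1) hi1 hi2] at hk'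
  rw [S_eq]
  push_cast at hk' ⊢
  linarith
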